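/- Let (Y_t)_{t∈[0,∞]} be a right-continuous submartingale indexed by [0,∞] (right-closed, i.e., Y_t ≤ E[Y_∞ | F_t] for all t) adapted to a filtration satisfying the usual conditions, and let τ be a stopping time. Then Y_τ is integrable and Y_0 ≤ E[Y_τ]. -/

import Mathlib

open MeasureTheory Filter Set
open scoped ENNReal NNReal Topology

namespace Stmt2Aux

noncomputable def grid (n k : ℕ) : ℝ≥0∞ := (k : ℝ≥0∞) / 2 ^ n


lemma two_pow_ne_zero (n : ℕ) : ((2:ℝ≥0∞) ^ n) ≠ 0 := by positivity

lemma two_pow_ne_top (n : ℕ) : ((2:ℝ≥0∞) ^ n) ≠ ⊤ :=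
  ENNReal.pow_ne_top (by simp)

lemma le_grid_iff {a : ℝ≥0∞} (ha : a ≠ ⊤) {n k : ℕ} :
    a ≤ grid n k ↔ a.toReal * 2 ^ n ≤ (k:ℝ) := by
  rw [grid, ENNReal.le_div_iff_mul_le (Or.inl (two_pow_ne_zero n)) (Or.inl (two_pow_ne_top n)),
    ← ENNReal.toReal_le_toReal (ENNReal.mul_ne_top ha (two_pow_ne_top n)) (by simp)]
  simp [ENNReal.toReal_mul]

lemma grid_mono {n k l : ℕ} (h : k ≤ l) : grid n k ≤ grid n l :=
  ENNReal.div_le_div_right (by exact_mod_cast h) _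

lemma grid_top (n : ℕ) : grid n (n * 2 ^ n) = (n : ℝ≥0∞) := by
  rw [grid]
  push_cast
  rw [mul_div_assoc, ENNReal.div_self (two_pow_ne_zero n) (two_pow_ne_top n), mul_one]

lemma grid_ne_top (n k : ℕ) : grid n k ≠ ⊤ := by
  simp [grid, ENNReal.div_eq_top, two_pow_ne_zero n]



variable {Ω : Type*} {mΩ : MeasurableSpace Ω} {μ : Measure Ω}

/-- discretized stopping index: dyadic ceiling of `τ`, capped at `n * 2^n`. -/
noncomputable def rho (τ : Ω → ℝ≥0∞) (n : ℕ) (ω : Ω) : ℕ :=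
  if τ ω ≤ (n : ℝ≥0∞) then ⌈(τ ω).toReal * 2 ^ n⌉₊ else n * 2 ^ n

/-- the discrete approximation to `Y_τ`, using `Y_⊤` beyond the cap. -/
noncomputable def phi (Y : ℝ≥0∞ → Ω → ℝ) (τ : Ω → ℝ≥0∞) (n : ℕ) (ω : Ω) : ℝ :=
  if τ ω ≤ (n : ℝ≥0∞) then Y (grid n (rho τ n ω)) ω else Y ⊤ ω

section props
variable {τ : Ω → ℝ≥0∞} {n : ℕ}

lemma tau_ne_top {ω : Ω} (h : τ ω ≤ (n : ℝ≥0∞)) : τ ω ≠ ⊤ :=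
  (h.trans_lt (ENNReal.natCast_lt_top n)).ne

lemma rho_le (τ : Ω → ℝ≥0∞) (n : ℕ) (ω : Ω) : rho τ n ω ≤ n * 2 ^ n := by
  rw [rho]
  split_ifs with h
  · refine Nat.ceil_le.2 ?_
    push_cast
    have h1 : (τ ω).toReal ≤ n := by
      simpa using ENNReal.toReal_mono (by simp) h
    exact mul_le_mul_of_nonneg_right h1 (by positivity)
  · exact le_refl _

lemma rho_le_iff {k : ℕ} (hk : k < n * 2 ^ n) {ω : Ω} :
    rho τ n ω ≤ k ↔ τ ω ≤ grid n k := by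
  have hgl : grid n k ≤ (n : ℝ≥0∞) := by
    rw [← grid_top]; exact grid_mono hk.le
  rw [rho]
  split_ifs with h
  · rw [Nat.ceil_le, le_grid_iff (tau_ne_top h)]
  · constructor
    · intro hle; omega
    · intro hle; exact absurd (hle.trans hgl) h

lemma grid_rho_le {ω : Ω} (h : τ ω ≤ (n : ℝ≥0∞)) : grid n (rho τ n ω) ≤ (n : ℝ≥0∞) := by
  rw [← grid_top]; exact grid_mono (rho_le τ n ω)

lemma le_grid_rho {ω : Ω} (h : τ ω ≤ (n : ℝ≥0∞)) : τ ω ≤ grid n (rho τ n ω) := by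
  rw [le_grid_iff (tau_ne_top h), rho, if_pos h]
  exact Nat.le_ceil _

lemma grid_rho_le_add {ω : Ω} (h : τ ω ≤ (n : ℝ≥0∞)) :
    grid n (rho τ n ω) ≤ τ ω + ((2:ℝ≥0∞) ^ n)⁻¹ := by
  have htop := tau_ne_top h
  have hx : (0:ℝ) ≤ (τ ω).toReal * 2 ^ n := by positivity
  have hceil : ((rho τ n ω : ℝ)) ≤ (τ ω).toReal * 2 ^ n + 1 := by
    rw [rho, if_pos h]
    exact (Nat.ceil_lt_add_one hx).le
  have hcast : ((rho τ n ω : ℝ≥0∞)) ≤ τ ω * 2 ^ n + 1 := by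
    calc ((rho τ n ω : ℝ≥0∞)) = ENNReal.ofReal (rho τ n ω : ℝ) := by
          simp [ENNReal.ofReal_natCast]
      _ ≤ ENNReal.ofReal ((τ ω).toReal * 2 ^ n + 1) := ENNReal.ofReal_le_ofReal hceil
      _ = ENNReal.ofReal ((τ ω).toReal * 2 ^ n) + 1 := by
          rw [ENNReal.ofReal_add hx zero_le_one, ENNReal.ofReal_one]
      _ = τ ω * 2 ^ n + 1 := by
          rw [ENNReal.ofReal_mul ENNReal.toReal_nonneg, ENNReal.ofReal_toReal htop,
            ENNReal.ofReal_pow zero_le_two]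
          norm_num
  calc grid n (rho τ n ω) ≤ (τ ω * 2 ^ n + 1) / 2 ^ n :=
        ENNReal.div_le_div_right hcast _
    _ = τ ω + ((2:ℝ≥0∞) ^ n)⁻¹ := by
        rw [ENNReal.add_div, mul_div_assoc, ENNReal.div_self (two_pow_ne_zero n) (two_pow_ne_top n),
          mul_one, one_div]

end props

lemma tendsto_phi {Y : ℝ≥0∞ → Ω → ℝ} {τ : Ω → ℝ≥0∞}
    (hrc : ∀ ω, ∀ t : ℝ≥0∞, ContinuousWithinAt (fun s => Y s ω) (Set.Ici t) t) (ω : Ω) :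
    Tendsto (fun n => phi Y τ n ω) atTop (𝓝 (Y (τ ω) ω)) := by
  by_cases htop : τ ω = ⊤
  · have : ∀ n : ℕ, phi Y τ n ω = Y (τ ω) ω := by
      intro n
      rw [phi, if_neg, htop]
      rw [htop]
      simp
    simpa [this] using tendsto_const_nhds
  · -- finite case
    set ξ : ℕ → ℝ≥0∞ := fun n => if τ ω ≤ (n:ℝ≥0∞) then grid n (rho τ n ω) else τ ω with hξ
    have hlow : ∀ n, τ ω ≤ ξ n := by
      intro n; rw [hξ]; dsimp only
      split_ifs with h
      · exact le_grid_rho h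
      · exact le_refl _
    have hup : ∀ n, ξ n ≤ τ ω + ((2:ℝ≥0∞) ^ n)⁻¹ := by
      intro n; rw [hξ]; dsimp only
      split_ifs with h
      · exact grid_rho_le_add h
      · exact le_self_add
    have htendlim : Tendsto (fun n : ℕ => τ ω + ((2:ℝ≥0∞) ^ n)⁻¹) atTop (𝓝 (τ ω)) := by
      have h2 : Tendsto (fun n : ℕ => ((2:ℝ≥0∞) ^ n)⁻¹) atTop (𝓝 0) := by
        refine Tendsto.congr (fun n => (ENNReal.inv_pow (a := 2) (n := n)).symm) ?_
        exact ENNReal.tendsto_pow_atTop_nhds_zero_of_lt_one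
          (by simp [ENNReal.inv_lt_one])
      simpa using tendsto_const_nhds.add h2
    have hxi : Tendsto ξ atTop (𝓝 (τ ω)) :=
      tendsto_of_tendsto_of_tendsto_of_le_of_le tendsto_const_nhds htendlim hlow hup
    have hxi' : Tendsto ξ atTop (𝓝[Set.Ici (τ ω)] (τ ω)) :=
      tendsto_nhdsWithin_of_tendsto_nhds_of_eventually_within _ hxi
        (Eventually.of_forall hlow)
    have hY : Tendsto (fun n => Y (ξ n) ω) atTop (𝓝 (Y (τ ω) ω)) :=
      (hrc ω (τ ω)).tendsto.comp hxi'
    refine hY.congr' ?_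
    obtain ⟨n₀, hn₀⟩ := ENNReal.exists_nat_gt htop
    filter_upwards [eventually_ge_atTop n₀] with n hn
    have h : τ ω ≤ (n:ℝ≥0∞) := le_trans hn₀.le (by exact_mod_cast hn)
    rw [hξ]; dsimp only; rw [if_pos h, phi, if_pos h]

section main

lemma stop_set {𝒻 : Filtration ℝ≥0∞ mΩ} {τ : Ω → ℝ≥0∞}
    (hτ : IsStoppingTime 𝒻 (fun ω => (τ ω : WithTop ℝ≥0∞))) (i : ℝ≥0∞) :
    MeasurableSet[𝒻 i] {ω | τ ω ≤ i} := by
  have := hτ i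
  simp only [WithTop.coe_le_coe] at this
  exact this

variable [IsProbabilityMeasure μ] {𝒻 : Filtration ℝ≥0∞ mΩ} {Y : ℝ≥0∞ → Ω → ℝ} {τ : Ω → ℝ≥0∞}

/-- discrete filtration along the dyadic grid capped at `n`. -/
noncomputable def Gfilt (𝒻 : Filtration ℝ≥0∞ mΩ) (n : ℕ) : Filtration ℕ mΩ where
  seq := fun k => 𝒻 (min (grid n k) (n : ℝ≥0∞))
  mono' := fun i j hij => 𝒻.mono (min_le_min (grid_mono hij) le_rfl)
  le' := fun _ => 𝒻.le _

/-- discrete process along the dyadic grid capped at `n`. -/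
noncomputable def fdisc (Y : ℝ≥0∞ → Ω → ℝ) (n : ℕ) : ℕ → Ω → ℝ :=
  fun k ω => Y (min (grid n k) (n : ℝ≥0∞)) ω

lemma submartingale_fdisc (hsub : Submartingale Y 𝒻 μ) (n : ℕ) :
    Submartingale (fdisc Y n) (Gfilt 𝒻 n) μ :=
  ⟨fun _ => hsub.stronglyAdapted _, fun i j hij =>
    hsub.2.1 _ _ (min_le_min (grid_mono hij) le_rfl), fun _ => hsub.integrable _⟩

lemma isStoppingTime_rho (hτ : IsStoppingTime 𝒻 (fun ω => (τ ω : WithTop ℝ≥0∞))) (n : ℕ) :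
    IsStoppingTime (Gfilt 𝒻 n) (fun ω => (WithTop.some (rho τ n ω))) := by
  intro k
  simp only [WithTop.coe_le_coe]
  by_cases hk : k < n * 2 ^ n
  · have hset : {ω | rho τ n ω ≤ k} = {ω | τ ω ≤ grid n k} := by
      ext ω; exact rho_le_iff hk
    have hmin : min (grid n k) (n : ℝ≥0∞) = grid n k :=
      min_eq_left (by rw [← grid_top (n := n)]; exact grid_mono hk.le)
    show MeasurableSet[𝒻 (min (grid n k) (n : ℝ≥0∞))] _
    rw [hset, hmin]
    exact stop_set hτ (grid n k)
  · have hset : {ω | rho τ n ω ≤ k} = Set.univ := by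
      ext ω
      simpa using (rho_le τ n ω).trans (by omega)
    rw [hset]
    exact MeasurableSet.univ

lemma integrable_phi_and_le (hsub : Submartingale Y 𝒻 μ) (hτ : IsStoppingTime 𝒻 (fun ω => (τ ω : WithTop ℝ≥0∞))) (n : ℕ) :
    Integrable (phi Y τ n) μ ∧ StronglyMeasurable (phi Y τ n) ∧
      ∫ ω, Y 0 ω ∂μ ≤ ∫ ω, phi Y τ n ω ∂μ := by
  set V := stoppedValue (fdisc Y n) (fun ω => (WithTop.some (rho τ n ω))) with hV
  have hsubm := submartingale_fdisc hsub n
  have hrho := isStoppingTime_rho hτ n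
  have hVint : Integrable V μ :=
    integrable_stoppedValue ℕ hrho (fun k => hsubm.integrable k)
      (fun ω => WithTop.coe_le_coe.2 (rho_le τ n ω))
  have hVsm : StronglyMeasurable V :=
    (stronglyMeasurable_stoppedValue_of_le hsubm.stronglyAdapted.isStronglyProgressive_of_discrete hrho
      (fun ω => WithTop.coe_le_coe.2 (rho_le τ n ω))).mono ((Gfilt 𝒻 n).le _)
  set A := {ω | τ ω ≤ (n : ℝ≥0∞)} with hA
  have hAf : MeasurableSet[𝒻 (n : ℝ≥0∞)] A := stop_set hτ (n : ℝ≥0∞)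
  have hAm : MeasurableSet A := 𝒻.le _ _ hAf
  have hYtop_sm : StronglyMeasurable (Y ⊤) := (hsub.stronglyAdapted ⊤).mono (𝒻.le ⊤)
  have hphi_eq : phi Y τ n = A.indicator V + Aᶜ.indicator (Y ⊤) := by
    funext ω
    by_cases h : τ ω ≤ (n : ℝ≥0∞)
    · have hωA : ω ∈ A := h
      simp only [Pi.add_apply, Set.indicator_of_mem hωA,
        Set.indicator_of_notMem (fun hc => hc hωA : ω ∉ Aᶜ)]
      rw [phi, if_pos h, hV]
      have : min (grid n (rho τ n ω)) (n : ℝ≥0∞) = grid n (rho τ n ω) :=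
        min_eq_left (grid_rho_le h)
      simp only [stoppedValue, WithTop.untopA, WithTop.untopD_coe]
      simp [stoppedValue, fdisc, this, add_zero]
    · have hωA : ω ∉ A := h
      simp only [Pi.add_apply, Set.indicator_of_notMem hωA,
        Set.indicator_of_mem (Set.mem_compl hωA)]
      rw [phi, if_neg h, zero_add]
  have hphi_int : Integrable (phi Y τ n) μ := by
    rw [hphi_eq]
    exact (hVint.indicator hAm).add ((hsub.integrable ⊤).indicator hAm.compl)
  have hphi_sm : StronglyMeasurable (phi Y τ n) := by
    rw [hphi_eq]
    exact (hVsm.indicator hAm).add (hYtop_sm.indicator hAm.compl)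
  refine ⟨hphi_int, hphi_sm, ?_⟩
  have h0 : IsStoppingTime (Gfilt 𝒻 n) (fun _ : Ω => (WithTop.some 0)) := isStoppingTime_const _ 0
  have hmono := hsubm.expected_stoppedValue_mono h0 hrho
    (fun ω => WithTop.coe_le_coe.2 (Nat.zero_le _)) (fun ω => WithTop.coe_le_coe.2 (rho_le τ n ω))
  have hsv0 : stoppedValue (fdisc Y n) (fun _ : Ω => (WithTop.some 0)) = Y 0 := by
    rw [stoppedValue_const]
    funext ω
    simp [fdisc, grid]
  rw [hsv0] at hmono
  refine le_trans hmono ?_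
  -- ∫ V ≤ ∫ phi
  rw [← integral_add_compl hAm hVint, ← integral_add_compl hAm hphi_int]
  have hon : Set.EqOn V (phi Y τ n) A := by
    intro ω hω
    rw [hphi_eq]
    simp [Set.indicator_of_mem hω, Set.indicator_of_notMem (fun hc => hc hω : ω ∉ Aᶜ)]
  refine add_le_add (le_of_eq (setIntegral_congr_fun hAm hon)) ?_
  have hVcompl : Set.EqOn V (Y (n : ℝ≥0∞)) Aᶜ := by
    intro ω hω
    have h : ¬ τ ω ≤ (n : ℝ≥0∞) := by simpa [hA] using hω
    rw [hV]
    have hrw : rho τ n ω = n * 2 ^ n := by rw [rho, if_neg h]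
    simp only [stoppedValue, WithTop.untopA, WithTop.untopD_coe]
    simp [stoppedValue, fdisc, hrw, grid_top]
  have hphicompl : Set.EqOn (phi Y τ n) (Y ⊤) Aᶜ := by
    intro ω hω
    have h : ¬ τ ω ≤ (n : ℝ≥0∞) := by simpa [hA] using hω
    rw [phi, if_neg h]
  rw [setIntegral_congr_fun hAm.compl hVcompl, setIntegral_congr_fun hAm.compl hphicompl]
  calc ∫ ω in Aᶜ, Y (n : ℝ≥0∞) ω ∂μ
      ≤ ∫ ω in Aᶜ, (μ[Y ⊤|𝒻 (n : ℝ≥0∞)]) ω ∂μ :=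
        setIntegral_mono_ae (hsub.integrable _).integrableOn
          integrable_condExp.integrableOn (hsub.2.1 _ ⊤ le_top)
    _ = ∫ ω in Aᶜ, Y ⊤ ω ∂μ :=
        setIntegral_condExp (𝒻.le _) (hsub.integrable ⊤) hAf.compl

lemma exists_bound (hsub : Submartingale Y 𝒻 μ) (hτ : IsStoppingTime 𝒻 (fun ω => (τ ω : WithTop ℝ≥0∞))) (n : ℕ)
    {c : ℝ} (hc : 0 ≤ c) :
    ∃ R : Ω → ℝ, Integrable R μ ∧ 0 ≤ᵐ[μ] R ∧
      (∫ ω, R ω ∂μ ≤ ∫ ω, max (max (Y ⊤ ω) 0 - c) 0 ∂μ) ∧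
      (∀ᵐ ω ∂μ, phi Y τ n ω ≤ c + R ω + max (Y ⊤ ω) 0) := by
  classical
  set N := n * 2 ^ n with hN
  set W : Ω → ℝ := fun ω => max (Y ⊤ ω) 0 with hW
  set G : Ω → ℝ := fun ω => max (W ω - c) 0 with hG
  have hG0 : ∀ ω, 0 ≤ G ω := fun ω => le_max_right _ _
  have hW0 : ∀ ω, 0 ≤ W ω := fun ω => le_max_right _ _
  have hGint : Integrable G μ :=
    (((hsub.integrable ⊤).pos_part).sub (integrable_const c)).pos_part
  set S : ℕ → Set Ω := fun k => {ω | τ ω ≤ grid n k} with hS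
  set T : ℕ → Set Ω := fun k => match k with
    | 0 => S 0
    | (k+1) => S (k+1) \ S k
    with hT
  have hTS : ∀ k, T k ⊆ S k := by
    intro k; cases k with
    | zero => exact subset_rfl
    | succ m => exact Set.diff_subset
  have hSmono : ∀ {i j : ℕ}, i ≤ j → S i ⊆ S j :=
    fun h ω hω => le_trans hω (grid_mono h)
  have hTm : ∀ k, MeasurableSet[𝒻 (grid n k)] (T k) := by
    intro k; cases k with
    | zero => exact stop_set hτ (grid n 0)
    | succ m =>
      exact (stop_set hτ (grid n (m+1))).diff ((𝒻.mono (grid_mono (Nat.le_succ m))) _ (stop_set hτ (grid n m)))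
  have hTm0 : ∀ k, MeasurableSet (T k) := fun k => 𝒻.le _ _ (hTm k)
  set R : Ω → ℝ := fun ω =>
    ∑ k ∈ Finset.range (N + 1), (T k).indicator (μ[G | 𝒻 (grid n k)]) ω with hR
  have hterm_int : ∀ k ∈ Finset.range (N + 1),
      Integrable ((T k).indicator (μ[G | 𝒻 (grid n k)])) μ :=
    fun k _ => integrable_condExp.indicator (hTm0 k)
  have hRint : Integrable R μ := by
    rw [hR]
    exact integrable_finset_sum _ hterm_int
  have hcond0 : ∀ᵐ ω ∂μ, ∀ k : ℕ, 0 ≤ (μ[G | 𝒻 (grid n k)]) ω :=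
    ae_all_iff.2 fun k => condExp_nonneg (Eventually.of_forall hG0)
  have hR0 : 0 ≤ᵐ[μ] R := by
    filter_upwards [hcond0] with ω hω
    refine Finset.sum_nonneg fun k _ => ?_
    exact Set.indicator_nonneg (fun x _ => hω k) ω
  have hdisj : (↑(Finset.range (N + 1)) : Set ℕ).Pairwise (Function.onFun Disjoint T) := by
    have key : ∀ i j, i < j → Disjoint (T i) (T j) := by
      intro i j hij
      obtain ⟨m, rfl⟩ : ∃ m, j = m + 1 := ⟨j - 1, by omega⟩
      have hsub' : T i ⊆ S m := (hTS i).trans (hSmono (Nat.lt_succ_iff.1 hij))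
      refine Set.disjoint_left.2 fun x hx hx2 => ?_
      exact hx2.2 (hsub' hx)
    intro i _ j _ hne
    rcases hne.lt_or_gt with h | h
    · exact key i j h
    · exact (key j i h).symm
  have hRle : ∫ ω, R ω ∂μ ≤ ∫ ω, G ω ∂μ := by
    rw [hR, integral_finset_sum _ hterm_int]
    have hterm : ∀ k ∈ Finset.range (N + 1),
        ∫ ω, (T k).indicator (μ[G | 𝒻 (grid n k)]) ω ∂μ = ∫ ω in T k, G ω ∂μ := by
      intro k _
      rw [integral_indicator (hTm0 k)]
      exact setIntegral_condExp (𝒻.le _) hGint (hTm k)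
    rw [Finset.sum_congr rfl hterm,
      ← integral_biUnion_finset (Finset.range (N + 1)) (fun k _ => hTm0 k) hdisj
        (fun k _ => hGint.integrableOn)]
    exact setIntegral_le_integral hGint (Eventually.of_forall hG0)
  refine ⟨R, hRint, hR0, hRle, ?_⟩
  have hmem : ∀ ω, τ ω ≤ (n : ℝ≥0∞) → ω ∈ T (rho τ n ω) := by
    intro ω h
    have htop := tau_ne_top h
    rcases hk : rho τ n ω with _ | m
    · show ω ∈ S 0
      rw [rho, if_pos h] at hk
      have : (τ ω).toReal * 2 ^ n ≤ 0 := by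
        have := Nat.ceil_eq_zero.1 hk
        linarith [this]
      exact (le_grid_iff htop).2 (by simpa using this)
    · constructor
      · refine (le_grid_iff htop).2 ?_
        rw [rho, if_pos h] at hk
        calc (τ ω).toReal * 2 ^ n ≤ (⌈(τ ω).toReal * 2 ^ n⌉₊ : ℝ) := Nat.le_ceil _
          _ = ((m+1 : ℕ) : ℝ) := by rw [hk]
      · intro hmem'
        have h1 : (τ ω).toReal * 2 ^ n ≤ (m : ℝ) := (le_grid_iff htop).1 hmem'
        have h2 : ⌈(τ ω).toReal * 2 ^ n⌉₊ ≤ m := Nat.ceil_le.2 h1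
        rw [rho, if_pos h] at hk
        omega
  have hcondle : ∀ᵐ ω ∂μ, ∀ k : ℕ, k ≤ N → Y (grid n k) ω ≤ c + (μ[G | 𝒻 (grid n k)]) ω := by
    rw [ae_all_iff]
    intro k
    by_cases hkN : k ≤ N
    swap
    · simp [hkN]
    have hptle : Y ⊤ ≤ᵐ[μ] fun ω => c + G ω := by
      refine Eventually.of_forall fun ω => ?_
      have h1 : Y ⊤ ω ≤ W ω := le_max_left _ _
      have h2 : W ω - c ≤ G ω := le_max_left _ _
      show Y ⊤ ω ≤ c + G ω
      linarith
    have h1 : Y (grid n k) ≤ᵐ[μ] μ[Y ⊤ | 𝒻 (grid n k)] := hsub.2.1 _ ⊤ le_top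
    have h2 : μ[Y ⊤ | 𝒻 (grid n k)] ≤ᵐ[μ] μ[fun ω => c + G ω | 𝒻 (grid n k)] :=
      condExp_mono (hsub.integrable ⊤) ((integrable_const c).add hGint) hptle
    have h3 : μ[fun ω => c + G ω | 𝒻 (grid n k)]
        =ᵐ[μ] fun ω => c + (μ[G | 𝒻 (grid n k)]) ω := by
      have := condExp_add (μ := μ) (m := 𝒻 (grid n k)) (integrable_const c) hGint
      refine this.trans ?_
      have hcc := condExp_const (μ := μ) (𝒻.le (grid n k)) c
      filter_upwards [] with ω
      rw [Pi.add_apply, hcc]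
    filter_upwards [h1, h2, h3] with ω hω1 hω2 hω3
    intro _
    calc Y (grid n k) ω ≤ _ := hω1
      _ ≤ _ := hω2
      _ = c + (μ[G | 𝒻 (grid n k)]) ω := hω3
  filter_upwards [hcondle, hcond0, hR0] with ω hω1 hω0 hωR
  by_cases h : τ ω ≤ (n : ℝ≥0∞)
  · have hrhoN : rho τ n ω ≤ N := rho_le τ n ω
    have hsingle : (μ[G | 𝒻 (grid n (rho τ n ω))]) ω ≤ R ω := by
      rw [hR]
      have hmem' := Set.indicator_of_mem (hmem ω h) (μ[G | 𝒻 (grid n (rho τ n ω))])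
      calc (μ[G | 𝒻 (grid n (rho τ n ω))]) ω
          = (T (rho τ n ω)).indicator (μ[G | 𝒻 (grid n (rho τ n ω))]) ω := hmem'.symm
        _ ≤ _ := Finset.single_le_sum
            (f := fun k => (T k).indicator (μ[G | 𝒻 (grid n k)]) ω)
            (fun k _ => Set.indicator_nonneg (fun x _ => hω0 k) ω)
            (Finset.mem_range.2 (by omega))
    rw [phi, if_pos h]
    calc Y (grid n (rho τ n ω)) ω ≤ c + (μ[G | 𝒻 (grid n (rho τ n ω))]) ω := hω1 _ hrhoN
      _ ≤ c + R ω := by linarith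
      _ ≤ c + R ω + W ω := by have h3 := hW0 ω; linarith
  · rw [phi, if_neg h]
    have h1 : Y ⊤ ω ≤ W ω := le_max_left _ _
    have h2 : (0:ℝ) ≤ R ω := hωR
    show Y ⊤ ω ≤ c + R ω + W ω
    linarith

lemma step (hsub : Submartingale Y 𝒻 μ) (hτ : IsStoppingTime 𝒻 (fun ω => (τ ω : WithTop ℝ≥0∞)))
    (hrc : ∀ ω, ∀ t : ℝ≥0∞, ContinuousWithinAt (fun s => Y s ω) (Set.Ici t) t) (m : ℕ) :
    Integrable (fun ω => Y (τ ω) ω) μ ∧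
      ∫ ω, Y 0 ω ∂μ ≤ ∫ ω, Y (τ ω) ω ∂μ + ∫ ω, max (max (Y ⊤ ω) 0 - (m:ℝ)) 0 ∂μ := by
  classical
  set W : Ω → ℝ := fun ω => max (Y ⊤ ω) 0 with hWdef
  set G : Ω → ℝ := fun ω => max (W ω - (m:ℝ)) 0 with hGdef
  have hWint : Integrable W μ := (hsub.integrable ⊤).pos_part
  have hW0 : ∀ ω, 0 ≤ W ω := fun ω => le_max_right _ _
  set Yτ : Ω → ℝ := fun ω => Y (τ ω) ω with hYτdef
  have htend : ∀ ω, Tendsto (fun n => phi Y τ n ω) atTop (𝓝 (Yτ ω)) := tendsto_phi hrc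
  have hkey := fun n => integrable_phi_and_le hsub hτ n
  have hBn := fun n => exists_bound hsub hτ n (c := (m:ℝ)) (Nat.cast_nonneg m)
  choose R hRint hR0 hRle hdom using hBn
  set B : ℕ → Ω → ℝ := fun n ω => (m:ℝ) + R n ω + W ω with hBdef
  have hBint : ∀ n, Integrable (B n) μ :=
    fun n => ((integrable_const _).add (hRint n)).add hWint
  set β : ℝ := (m:ℝ) + ∫ ω, G ω ∂μ + ∫ ω, W ω ∂μ with hβdef
  have hintB : ∀ n, ∫ ω, B n ω ∂μ ≤ β := by
    intro n
    have h1 : ∫ ω, B n ω ∂μ = (∫ ω, ((m:ℝ) + R n ω) ∂μ) + ∫ ω, W ω ∂μ :=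
      integral_add ((integrable_const _).add (hRint n)) hWint
    have h2 : ∫ ω, ((m:ℝ) + R n ω) ∂μ = (m:ℝ) + ∫ ω, R n ω ∂μ := by
      rw [integral_add (integrable_const _) (hRint n)]
      simp [measure_univ]
    rw [hβdef, h1, h2]
    have := hRle n
    linarith
  have hB0 : ∀ n, 0 ≤ᵐ[μ] B n := by
    intro n
    filter_upwards [hR0 n] with ω hω
    have hR' : (0:ℝ) ≤ R n ω := hω
    have hw := hW0 ω
    have hm : (0:ℝ) ≤ (m:ℝ) := Nat.cast_nonneg m
    show (0:ℝ) ≤ (m:ℝ) + R n ω + W ω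
    linarith
  have hphi_int_le : ∀ n, ∫ ω, phi Y τ n ω ∂μ ≤ ∫ ω, B n ω ∂μ :=
    fun n => integral_mono_ae (hkey n).1 (hBint n) (hdom n)
  have hI0 : ∀ n, ∫ ω, Y 0 ω ∂μ ≤ ∫ ω, phi Y τ n ω ∂μ := fun n => (hkey n).2.2
  have hβ0 : ∫ ω, Y 0 ω ∂μ ≤ β := (hI0 0).trans ((hphi_int_le 0).trans (hintB 0))
  have hYτsm : AEStronglyMeasurable Yτ μ :=
    aestronglyMeasurable_of_tendsto_ae atTop
      (fun n => ((hkey n).2.1).aestronglyMeasurable)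
      (Eventually.of_forall htend)
  have hphi_meas : ∀ n, AEMeasurable (fun ω => ENNReal.ofReal (phi Y τ n ω)) μ :=
    fun n => ENNReal.measurable_ofReal.comp_aemeasurable ((hkey n).2.1).measurable.aemeasurable
  -- lintegral of ofReal ∘ (B n) equals ofReal of integral
  have hlintB : ∀ n, ∫⁻ ω, ENNReal.ofReal (B n ω) ∂μ ≤ ENNReal.ofReal β := by
    intro n
    rw [← ofReal_integral_eq_lintegral_ofReal (hBint n) (hB0 n)]
    exact ENNReal.ofReal_le_ofReal (hintB n)
  -- positive part bound
  have hpos : ∫⁻ ω, ENNReal.ofReal (Yτ ω) ∂μ ≤ ENNReal.ofReal β := by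
    have hptw : ∀ ω, ENNReal.ofReal (Yτ ω) =
        Filter.liminf (fun n => ENNReal.ofReal (phi Y τ n ω)) atTop := by
      intro ω
      exact (((ENNReal.continuous_ofReal.tendsto _).comp (htend ω)).liminf_eq).symm
    calc ∫⁻ ω, ENNReal.ofReal (Yτ ω) ∂μ
        = ∫⁻ ω, Filter.liminf (fun n => ENNReal.ofReal (phi Y τ n ω)) atTop ∂μ :=
          lintegral_congr hptw
      _ ≤ Filter.liminf (fun n => ∫⁻ ω, ENNReal.ofReal (phi Y τ n ω) ∂μ) atTop :=
          lintegral_liminf_le' hphi_meas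
      _ ≤ Filter.liminf (fun _ : ℕ => ENNReal.ofReal β) atTop := by
          refine Filter.liminf_le_liminf (Eventually.of_forall fun n => ?_)
          calc ∫⁻ ω, ENNReal.ofReal (phi Y τ n ω) ∂μ
              ≤ ∫⁻ ω, ENNReal.ofReal (B n ω) ∂μ := by
                refine lintegral_mono_ae ?_
                filter_upwards [hdom n] with ω hω
                exact ENNReal.ofReal_le_ofReal hω
            _ ≤ ENNReal.ofReal β := hlintB n
      _ = ENNReal.ofReal β := Filter.liminf_const _
  -- bound for Z = m + W - Yτ
  set Z : Ω → ℝ := fun ω => (m:ℝ) + W ω - Yτ ω with hZdef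
  have hZbound : ∫⁻ ω, ENNReal.ofReal (Z ω) ∂μ ≤ ENNReal.ofReal (β - ∫ ω, Y 0 ω ∂μ) := by
    set D : ℕ → Ω → ℝ := fun n ω => B n ω - phi Y τ n ω with hDdef
    have hDint : ∀ n, Integrable (D n) μ := fun n => (hBint n).sub (hkey n).1
    have hD0 : ∀ n, 0 ≤ᵐ[μ] D n := by
      intro n
      filter_upwards [hdom n] with ω hω
      simpa [hDdef, sub_nonneg] using hω
    have hDmeas : ∀ n, AEMeasurable (fun ω => ENNReal.ofReal (D n ω)) μ :=
      fun n => ENNReal.measurable_ofReal.comp_aemeasurable (hDint n).aemeasurable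
    have hDle : ∀ n, ∫⁻ ω, ENNReal.ofReal (D n ω) ∂μ ≤ ENNReal.ofReal (β - ∫ ω, Y 0 ω ∂μ) := by
      intro n
      rw [← ofReal_integral_eq_lintegral_ofReal (hDint n) (hD0 n)]
      refine ENNReal.ofReal_le_ofReal ?_
      have h1 : ∫ ω, D n ω ∂μ = ∫ ω, B n ω ∂μ - ∫ ω, phi Y τ n ω ∂μ :=
        integral_sub (hBint n) (hkey n).1
      have := hintB n
      have := hI0 n
      linarith
    have hptw : ∀ᵐ ω ∂μ, ENNReal.ofReal (Z ω) ≤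
        Filter.liminf (fun n => ENNReal.ofReal (D n ω)) atTop := by
      have hallR : ∀ᵐ ω ∂μ, ∀ n, 0 ≤ R n ω := ae_all_iff.2 hR0
      filter_upwards [hallR] with ω hω
      have h1 : Tendsto (fun n => ENNReal.ofReal ((m:ℝ) + W ω - phi Y τ n ω)) atTop
          (𝓝 (ENNReal.ofReal (Z ω))) :=
        (ENNReal.continuous_ofReal.tendsto _).comp (tendsto_const_nhds.sub (htend ω))
      rw [← h1.liminf_eq]
      refine Filter.liminf_le_liminf (Eventually.of_forall fun n => ?_)
      refine ENNReal.ofReal_le_ofReal ?_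
      have := hω n
      show (m:ℝ) + W ω - phi Y τ n ω ≤ (m:ℝ) + R n ω + W ω - phi Y τ n ω
      linarith
    calc ∫⁻ ω, ENNReal.ofReal (Z ω) ∂μ
        ≤ ∫⁻ ω, Filter.liminf (fun n => ENNReal.ofReal (D n ω)) atTop ∂μ :=
          lintegral_mono_ae hptw
      _ ≤ Filter.liminf (fun n => ∫⁻ ω, ENNReal.ofReal (D n ω) ∂μ) atTop :=
          lintegral_liminf_le' hDmeas
      _ ≤ Filter.liminf (fun _ : ℕ => ENNReal.ofReal (β - ∫ ω, Y 0 ω ∂μ)) atTop :=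
          Filter.liminf_le_liminf (Eventually.of_forall hDle)
      _ = ENNReal.ofReal (β - ∫ ω, Y 0 ω ∂μ) := Filter.liminf_const _
  -- integrability of Yτ
  have hneg : ∫⁻ ω, ENNReal.ofReal (-(Yτ ω)) ∂μ ≤ ENNReal.ofReal (β - ∫ ω, Y 0 ω ∂μ) := by
    refine le_trans (lintegral_mono fun ω => ?_) hZbound
    refine ENNReal.ofReal_le_ofReal ?_
    have h1 := hW0 ω
    have hm : (0:ℝ) ≤ (m:ℝ) := Nat.cast_nonneg m
    show -(Yτ ω) ≤ (m:ℝ) + W ω - Yτ ω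
    linarith
  have hYτint : Integrable Yτ μ := by
    refine ⟨hYτsm, ?_⟩
    rw [hasFiniteIntegral_iff_norm]
    have hptw : ∀ ω, ENNReal.ofReal ‖Yτ ω‖ ≤
        ENNReal.ofReal (Yτ ω) + ENNReal.ofReal (-(Yτ ω)) := by
      intro ω
      rcases le_total 0 (Yτ ω) with h | h
      · rw [Real.norm_eq_abs, abs_of_nonneg h]
        exact le_add_of_le_of_nonneg le_rfl zero_le
      · rw [Real.norm_eq_abs, abs_of_nonpos h]
        exact le_add_of_nonneg_of_le zero_le le_rfl
    calc ∫⁻ ω, ENNReal.ofReal ‖Yτ ω‖ ∂μ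
        ≤ ∫⁻ ω, (ENNReal.ofReal (Yτ ω) + ENNReal.ofReal (-(Yτ ω))) ∂μ := lintegral_mono hptw
      _ = ∫⁻ ω, ENNReal.ofReal (Yτ ω) ∂μ + ∫⁻ ω, ENNReal.ofReal (-(Yτ ω)) ∂μ :=
          lintegral_add_left' (ENNReal.measurable_ofReal.comp_aemeasurable hYτsm.aemeasurable) _
      _ < ⊤ := ENNReal.add_lt_top.2
          ⟨lt_of_le_of_lt hpos ENNReal.ofReal_lt_top,
            lt_of_le_of_lt hneg ENNReal.ofReal_lt_top⟩
  refine ⟨hYτint, ?_⟩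
  -- final inequality
  have hZint : Integrable Z μ := ((integrable_const _).add hWint).sub hYτint
  have hZint_eq : ∫ ω, Z ω ∂μ = (m:ℝ) + ∫ ω, W ω ∂μ - ∫ ω, Yτ ω ∂μ := by
    calc ∫ ω, Z ω ∂μ = ∫ ω, (((m:ℝ) + W ω) - Yτ ω) ∂μ := rfl
      _ = (∫ ω, ((m:ℝ) + W ω) ∂μ) - ∫ ω, Yτ ω ∂μ :=
          integral_sub ((integrable_const _).add hWint) hYτint
      _ = ((m:ℝ) + ∫ ω, W ω ∂μ) - ∫ ω, Yτ ω ∂μ := by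
          rw [integral_add (integrable_const _) hWint]
          simp [measure_univ]
      _ = (m:ℝ) + ∫ ω, W ω ∂μ - ∫ ω, Yτ ω ∂μ := by ring
  have hZle : ∫ ω, Z ω ∂μ ≤ β - ∫ ω, Y 0 ω ∂μ := by
    have h1 := integral_eq_lintegral_pos_part_sub_lintegral_neg_part hZint
    have h2 : (∫⁻ ω, ENNReal.ofReal (Z ω) ∂μ).toReal ≤ β - ∫ ω, Y 0 ω ∂μ := by
      refine le_trans (ENNReal.toReal_mono ENNReal.ofReal_ne_top hZbound) ?_
      rw [ENNReal.toReal_ofReal (by linarith)]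
    have h3 : (0:ℝ) ≤ (∫⁻ ω, ENNReal.ofReal (-(Z ω)) ∂μ).toReal := ENNReal.toReal_nonneg
    rw [h1]
    linarith
  rw [hZint_eq] at hZle
  show ∫ ω, Y 0 ω ∂μ ≤ ∫ ω, Yτ ω ∂μ + ∫ ω, G ω ∂μ
  have hβeq : β = (m:ℝ) + ∫ ω, G ω ∂μ + ∫ ω, W ω ∂μ := hβdef
  linarith

end main
end Stmt2Aux

/-- Optional sampling for a right-closed right-continuous submartingale
indexed by `[0,∞]`: for any stopping time `τ`, `Y_τ` is integrable and `Y_0 ≤ E[Y_τ]`.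
(The index set `ℝ≥0∞` includes `∞`, so the submartingale property `Y_t ≤ E[Y_∞ | F_t]`
is part of the submartingale hypothesis.) -/
theorem stmt2 {Ω : Type*} {mΩ : MeasurableSpace Ω} {μ : Measure Ω} [IsProbabilityMeasure μ]
    (𝒻 : Filtration ℝ≥0∞ mΩ)
    (husual : ∀ t : ℝ≥0∞, t < ⊤ → 𝒻 t = ⨅ s ∈ Set.Ioi t, 𝒻 s)  -- right-continuous filtration
    (Y : ℝ≥0∞ → Ω → ℝ)
    (hrc : ∀ ω, ∀ t : ℝ≥0∞, ContinuousWithinAt (fun s => Y s ω) (Set.Ici t) t)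
    (hsub : Submartingale Y 𝒻 μ)
    (τ : Ω → ℝ≥0∞) (hτ : IsStoppingTime 𝒻 (fun ω => (τ ω : WithTop ℝ≥0∞))) :
    Integrable (fun ω => Y (τ ω) ω) μ ∧ ∫ ω, Y 0 ω ∂μ ≤ ∫ ω, Y (τ ω) ω ∂μ := by
  have hstep := fun m : ℕ => Stmt2Aux.step hsub hτ hrc m
  refine ⟨(hstep 0).1, ?_⟩
  set W : Ω → ℝ := fun ω => max (Y ⊤ ω) 0 with hW
  have hWint : Integrable W μ := (hsub.integrable ⊤).pos_part
  have hδ : Tendsto (fun m : ℕ => ∫ ω, max (max (Y ⊤ ω) 0 - (m:ℝ)) 0 ∂μ) atTop (𝓝 0) := by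
    have hδ' : Tendsto (fun m : ℕ => ∫ ω, max (max (Y ⊤ ω) 0 - (m:ℝ)) 0 ∂μ) atTop
        (𝓝 (∫ _ω, (0:ℝ) ∂μ)) := by
      refine tendsto_integral_of_dominated_convergence W
        (fun m => ((hWint.sub (integrable_const _)).pos_part).aestronglyMeasurable)
        hWint ?_ ?_
      · intro m
        refine Eventually.of_forall fun ω => ?_
        have h1 : (0:ℝ) ≤ max (max (Y ⊤ ω) 0 - (m:ℝ)) 0 := le_max_right _ _
        rw [Real.norm_eq_abs, abs_of_nonneg h1]
        have h2 : max (Y ⊤ ω) 0 - (m:ℝ) ≤ W ω := by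
          have : (0:ℝ) ≤ (m:ℝ) := Nat.cast_nonneg m
          simp only [hW]
          linarith
        exact max_le h2 (le_max_right _ _)
      · refine Eventually.of_forall fun ω => ?_
        refine Tendsto.congr' ?_ tendsto_const_nhds
        filter_upwards [tendsto_natCast_atTop_atTop.eventually_ge_atTop (max (Y ⊤ ω) 0)]
          with m hm
        have hle : max (Y ⊤ ω) 0 - (m:ℝ) ≤ 0 := by linarith
        exact (max_eq_right hle).symm
    simpa using hδ'
  have hlim : Tendsto (fun m : ℕ =>
      ∫ ω, Y (τ ω) ω ∂μ + ∫ ω, max (max (Y ⊤ ω) 0 - (m:ℝ)) 0 ∂μ) atTop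
      (𝓝 (∫ ω, Y (τ ω) ω ∂μ)) := by
    simpa using tendsto_const_nhds.add hδ
  exact ge_of_tendsto' hlim fun m => (hstep m).2
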